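/- If S₁ ∈ 𝔖 and S₂ ∈ 𝔖, then the pointwise product S₁·S₂ belongs to 𝔖. -/

import Mathlib

noncomputable section

/-- The open upper half-plane `ℂ₊`. -/
def upperHalf : Set ℂ := {z : ℂ | 0 < z.im}

/-- The sector `{z : ε ≤ arg z ≤ π − ε}`. -/
def sector (ε : ℝ) : Set ℂ := {z : ℂ | ε ≤ Complex.arg z ∧ Complex.arg z ≤ Real.pi - ε}

/-- The filter describing `|z| → ∞` within the sector `{ε ≤ arg z ≤ π − ε}`. -/
def sectorAtInfty (ε : ℝ) : Filter ℂ :=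
  (Filter.comap (fun z : ℂ => ‖z‖) Filter.atTop) ⊓ Filter.principal (sector ε)

/-- The class `𝔠` of Livšic functions: holomorphic maps `s : ℂ₊ → 𝔻` with `s(i) = 0` such that
for every unimodular `θ`, `|z|·|s(z) − θ| → ∞` as `|z| → ∞` in every sector
`{ε ≤ arg z ≤ π − ε}`, `ε > 0`. -/
def MemLivsicClass (s : ℂ → ℂ) : Prop :=
  DifferentiableOn ℂ s upperHalf ∧
  (∀ z ∈ upperHalf, ‖s z‖ < 1) ∧
  s Complex.I = 0 ∧
  ∀ θ : ℂ, ‖θ‖ = 1 → ∀ ε : ℝ, 0 < ε →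
    Filter.Tendsto (fun z => ‖z‖ * ‖s z - θ‖) (sectorAtInfty ε)
      Filter.atTop

/-- The class `𝔖` of characteristic functions: the functions of the form
`S(z) = (s(z) − κ)/(κ̄ s(z) − 1)` on `ℂ₊` with `s ∈ 𝔠` and `κ ∈ 𝔻`. -/
def MemCharClass (S : ℂ → ℂ) : Prop :=
  ∃ (s : ℂ → ℂ) (κ : ℂ), MemLivsicClass s ∧ ‖κ‖ < 1 ∧
    ∀ z ∈ upperHalf, S z = (s z - κ) / ((starRingEnd ℂ) κ * s z - 1)

open Complex Filter Set Metric Topology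


def mob (κ w : ℂ) : ℂ := (w - κ) / ((starRingEnd ℂ) κ * w - 1)

lemma normSq_key (κ w : ℂ) :
    normSq ((starRingEnd ℂ) κ * w - 1) = normSq (w - κ) + (1 - normSq κ) * (1 - normSq w) := by
  simp [normSq_apply, mul_re, mul_im, sub_re, sub_im, conj_re, conj_im]
  ring

lemma denom_ne (κ w : ℂ) (hκ : ‖κ‖ < 1) (hw : ‖w‖ ≤ 1) :
    (starRingEnd ℂ) κ * w - 1 ≠ 0 := by
  intro h
  have h1 : (starRingEnd ℂ) κ * w = 1 := by linear_combination h
  have : ‖(starRingEnd ℂ) κ * w‖ < 1 := by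
    rw [norm_mul, Complex.norm_conj]
    calc ‖κ‖ * ‖w‖ ≤ ‖κ‖ * 1 :=
      mul_le_mul_of_nonneg_left hw (norm_nonneg _)
    _ < 1 := by simpa using hκ
  rw [h1] at this; simp at this

lemma mob_lt_one {κ w : ℂ} (hκ : ‖κ‖ < 1) (hw : ‖w‖ < 1) :
    ‖mob κ w‖ < 1 := by
  have hd := denom_ne κ w hκ hw.le
  rw [mob, norm_div, div_lt_one (norm_pos_iff.mpr hd)]
  have h1 : normSq (w - κ) < normSq ((starRingEnd ℂ) κ * w - 1) := by
    rw [normSq_key]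
    nlinarith [normSq_nonneg κ, normSq_nonneg w, (Complex.sq_norm κ) ▸ (by nlinarith [norm_nonneg κ] : (‖κ‖)^2 < 1),
      (Complex.sq_norm w) ▸ (by nlinarith [norm_nonneg w] : (‖w‖)^2 < 1)]
  have := Real.sqrt_lt_sqrt (normSq_nonneg _) h1
  simpa [Complex.norm_def] using this

lemma mob_eq_one {κ w : ℂ} (hκ : ‖κ‖ < 1) (hw : ‖w‖ = 1) :
    ‖mob κ w‖ = 1 := by
  have hd := denom_ne κ w hκ hw.le
  have h1 : normSq w = 1 := by rw [← Complex.sq_norm, hw]; norm_num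
  have h2 : normSq ((starRingEnd ℂ) κ * w - 1) = normSq (w - κ) := by
    rw [normSq_key, h1]; ring
  rw [mob, norm_div, div_eq_one_iff_eq (norm_pos_iff.mpr hd).ne']
  rw [Complex.norm_def, Complex.norm_def, h2]

lemma mob_le_one {κ w : ℂ} (hκ : ‖κ‖ < 1) (hw : ‖w‖ ≤ 1) :
    ‖mob κ w‖ ≤ 1 := by
  rcases lt_or_eq_of_le hw with h | h
  · exact (mob_lt_one hκ h).le
  · exact (mob_eq_one hκ h).le

lemma mob_invol {κ w : ℂ} (hκ : ‖κ‖ < 1) (hw : ‖w‖ ≤ 1) :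
    mob κ (mob κ w) = w := by
  have hd := denom_ne κ w hκ hw
  have hd2 := denom_ne κ (mob κ w) hκ (mob_le_one hκ hw)
  rw [show mob κ (mob κ w) = (mob κ w - κ) / ((starRingEnd ℂ) κ * mob κ w - 1) from rfl]
  rw [div_eq_iff hd2]
  simp only [mob]
  rw [div_sub' hd, mul_div_assoc', div_sub' hd, mul_div_assoc']
  congr 1
  ring

lemma mob_diff_lower {κ w w' : ℂ} (hκ : ‖κ‖ < 1) (hw : ‖w‖ ≤ 1)
    (hw' : ‖w'‖ ≤ 1) :
    (1 - ‖κ‖ ^ 2) / 4 * ‖w - w'‖ ≤ ‖mob κ w - mob κ w'‖ := by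
  have hd := denom_ne κ w hκ hw
  have hd' := denom_ne κ w' hκ hw'
  have key : mob κ w - mob κ w' =
      (((‖κ‖ : ℂ)^2 - 1) * (w - w')) / (((starRingEnd ℂ) κ * w - 1) * ((starRingEnd ℂ) κ * w' - 1)) := by
    rw [mob, mob, div_sub_div _ _ hd hd']
    congr 1
    have : ((‖κ‖ : ℂ))^2 = (starRingEnd ℂ) κ * κ := by
      rw [← Complex.normSq_eq_conj_mul_self, ← Complex.sq_norm]; push_cast; ring
    rw [this]; ring
  rw [key, norm_div, norm_mul, norm_mul]
  have hb1 : ‖(starRingEnd ℂ) κ * w - 1‖ ≤ 2 := by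
    calc ‖(starRingEnd ℂ) κ * w - 1‖ ≤ ‖(starRingEnd ℂ) κ * w‖ + 1 := by
          simpa using norm_sub_le ((starRingEnd ℂ) κ * w) 1
    _ ≤ 2 := by
        rw [norm_mul, Complex.norm_conj]
        nlinarith [norm_nonneg κ, norm_nonneg w]
  have hb2 : ‖(starRingEnd ℂ) κ * w' - 1‖ ≤ 2 := by
    calc ‖(starRingEnd ℂ) κ * w' - 1‖ ≤ ‖(starRingEnd ℂ) κ * w'‖ + 1 := by
          simpa using norm_sub_le ((starRingEnd ℂ) κ * w') 1
    _ ≤ 2 := by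
        rw [norm_mul, Complex.norm_conj]
        nlinarith [norm_nonneg κ, norm_nonneg w']
  have habs : ‖((‖κ‖ : ℂ))^2 - 1‖ = 1 - ‖κ‖ ^ 2 := by
    rw [← norm_neg]
    have : -(((‖κ‖ : ℂ))^2 - 1) = ((1 - ‖κ‖ ^ 2 : ℝ) : ℂ) := by push_cast; ring
    rw [this, Complex.norm_real, Real.norm_eq_abs]
    exact abs_of_nonneg (by nlinarith [norm_nonneg κ])
  rw [habs]
  have hd1p : 0 < ‖(starRingEnd ℂ) κ * w - 1‖ := norm_pos_iff.mpr hd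
  have hd2p : 0 < ‖(starRingEnd ℂ) κ * w' - 1‖ := norm_pos_iff.mpr hd'
  have hsq : ‖κ‖ ^ 2 < 1 := by nlinarith [norm_nonneg κ]
  have hnum : 0 ≤ (1 - ‖κ‖ ^ 2) * ‖w - w'‖ :=
    mul_nonneg (by linarith) (norm_nonneg _)
  calc (1 - ‖κ‖ ^ 2) / 4 * ‖w - w'‖
      = (1 - ‖κ‖ ^ 2) * ‖w - w'‖ / 4 := by ring
    _ ≤ (1 - ‖κ‖ ^ 2) * ‖w - w'‖ /
        (‖(starRingEnd ℂ) κ * w - 1‖ * ‖(starRingEnd ℂ) κ * w' - 1‖) := by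
        gcongr
        nlinarith


lemma sector_im {ε : ℝ} (hε : 0 < ε) {z : ℂ} (hz : z ∈ sector ε) :
    Real.sin ε * ‖z‖ ≤ z.im := by
  obtain ⟨h1, h2⟩ := hz
  have hz0 : z ≠ 0 := by
    rintro rfl
    rw [Complex.arg_zero] at h1 h2
    have := Real.pi_pos
    linarith
  have hε2 : ε ≤ Real.pi / 2 := by linarith [le_trans h1 h2]
  have hsin : Real.sin ε ≤ Real.sin (Complex.arg z) := by
    rcases le_or_gt (Complex.arg z) (Real.pi / 2) with h | h
    · exact Real.sin_le_sin_of_le_of_le_pi_div_two (by linarith) h h1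
    · rw [show Real.sin (Complex.arg z) = Real.sin (Real.pi - Complex.arg z) from
        (Real.sin_pi_sub _).symm]
      exact Real.sin_le_sin_of_le_of_le_pi_div_two (by linarith) (by linarith) (by linarith)
  calc Real.sin ε * ‖z‖ ≤ Real.sin (Complex.arg z) * ‖z‖ := by
        have := norm_nonneg z
        nlinarith
    _ = z.im := by rw [mul_comm]; exact Complex.norm_mul_sin_arg z

lemma sector_pos_abs {ε : ℝ} (hε : 0 < ε) {z : ℂ} (hz : z ∈ sector ε) :
    0 < ‖z‖ := by
  rcases eq_or_ne z 0 with rfl | h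
  · obtain ⟨h1, h2⟩ := hz
    rw [Complex.arg_zero] at h1 h2
    have := Real.pi_pos
    linarith
  · exact norm_pos_iff.mpr h

lemma sector_sin_pos {ε : ℝ} (hε : 0 < ε) {z : ℂ} (hz : z ∈ sector ε) : 0 < Real.sin ε := by
  obtain ⟨h1, h2⟩ := hz
  have : ε ≤ Real.pi - ε := le_trans h1 h2
  exact Real.sin_pos_of_pos_of_lt_pi hε (by linarith [Real.pi_pos])

lemma sector_subset {ε : ℝ} (hε : 0 < ε) : sector ε ⊆ upperHalf := by
  intro z hz
  have h1 := sector_im hε hz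
  have h2 := sector_pos_abs hε hz
  have h3 := sector_sin_pos hε hz
  show 0 < z.im
  nlinarith


lemma normSq_conj_diff (z w : ℂ) :
    normSq (z - (starRingEnd ℂ) w) = normSq (z - w) + 4 * z.im * w.im := by
  simp [normSq_apply, sub_re, sub_im, conj_re, conj_im]
  ring


lemma im_ne_upper {z w : ℂ} (hz : z ∈ upperHalf) (hw : w ∈ upperHalf) :
    z - (starRingEnd ℂ) w ≠ 0 := by
  intro h
  have := congrArg Complex.im h
  simp [sub_im, conj_im] at this
  have hz' : (0:ℝ) < z.im := hz
  have hw' : (0:ℝ) < w.im := hw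
  linarith

/-- Schwarz–Pick inequality for holomorphic maps from the upper half-plane to the unit disk. -/
lemma schwarz_pick {f : ℂ → ℂ} (hd : DifferentiableOn ℂ f upperHalf)
    (hb : ∀ z ∈ upperHalf, ‖f z‖ < 1) {z w : ℂ}
    (hz : z ∈ upperHalf) (hw : w ∈ upperHalf) :
    ‖f z - f w‖ * ‖z - (starRingEnd ℂ) w‖ ≤
      ‖(starRingEnd ℂ) (f w) * f z - 1‖ * ‖z - w‖ := by
  have hwim : (0:ℝ) < w.im := hw
  have hzim : (0:ℝ) < z.im := hz
  set M : ℂ → ℂ := fun ξ => (w - (starRingEnd ℂ) w * ξ) / (1 - ξ) with hM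
  -- M maps the unit ball into the upper half-plane
  have hMmaps : ∀ ξ : ℂ, ‖ξ‖ < 1 → M ξ ∈ upperHalf := by
    intro ξ hξ
    have hne : (1:ℂ) - ξ ≠ 0 := by
      intro h
      have : ξ = 1 := by linear_combination -h
      rw [this] at hξ; simp at hξ
    have hns : 0 < normSq (1 - ξ) := normSq_pos.mpr hne
    show 0 < (M ξ).im
    have hkey : (w - (starRingEnd ℂ) w * ξ).im * (1 - ξ).re -
        (w - (starRingEnd ℂ) w * ξ).re * (1 - ξ).im = w.im * (1 - normSq ξ) := by
      simp [mul_im, mul_re, sub_im, sub_re, conj_re, conj_im, normSq_apply]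
      ring
    have : (M ξ).im = w.im * (1 - normSq ξ) / normSq (1 - ξ) := by
      rw [hM]
      simp only [Complex.div_im]
      rw [div_sub_div_same, hkey]
    rw [this]
    have h2 : normSq ξ < 1 := by
      have := Complex.sq_norm ξ
      nlinarith [norm_nonneg ξ]
    exact div_pos (mul_pos hwim (by linarith)) hns
  have hMdiff : DifferentiableOn ℂ M (ball 0 1) := by
    apply DifferentiableOn.div
    · exact (differentiableOn_const _).sub ((differentiableOn_const _).mul differentiableOn_id)
    · exact (differentiableOn_const _).sub differentiableOn_id
    · intro ξ hξ
      rw [mem_ball_zero_iff] at hξ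
      intro h
      have : ξ = 1 := by linear_combination -h
      rw [this] at hξ; simp at hξ
  set g : ℂ → ℂ := fun ξ => mob (f w) (f (M ξ)) with hg
  have hfw : ‖f w‖ < 1 := hb w hw
  have habsg : ∀ ξ : ℂ, ‖ξ‖ < 1 → ‖g ξ‖ < 1 := by
    intro ξ hξ
    exact mob_lt_one hfw (hb _ (hMmaps ξ hξ))
  have hgdiff : DifferentiableOn ℂ g (ball 0 1) := by
    have hfM : DifferentiableOn ℂ (fun ξ => f (M ξ)) (ball 0 1) :=
      hd.comp hMdiff fun ξ hξ => hMmaps ξ (mem_ball_zero_iff.mp hξ)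
    apply DifferentiableOn.div
    · exact hfM.sub (differentiableOn_const _)
    · exact ((differentiableOn_const _).mul hfM).sub (differentiableOn_const _)
    · intro ξ hξ
      exact denom_ne _ _ hfw (hb _ (hMmaps ξ (mem_ball_zero_iff.mp hξ))).le
  have hg0 : g 0 = 0 := by
    have hM0 : M 0 = w := by
      show (w - (starRingEnd ℂ) w * 0) / (1 - 0) = w
      simp
    show mob (f w) (f (M 0)) = 0
    rw [hM0]
    simp [mob]
  -- apply the Schwarz lemma
  have hSchwarz : ∀ ξ : ℂ, ‖ξ‖ < 1 → ‖g ξ‖ ≤ ‖ξ‖ := by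
    intro ξ hξ
    refine Complex.norm_le_norm_of_mapsTo_ball hgdiff ?_ hg0 (by simpa using hξ)
    intro u hu
    rw [mem_ball_zero_iff] at hu
    rw [mem_closedBall_zero_iff]
    exact (habsg u hu).le
  -- the specific point
  have hzw : z - (starRingEnd ℂ) w ≠ 0 := im_ne_upper hz hw
  have hww : w - (starRingEnd ℂ) w ≠ 0 := im_ne_upper hw hw
  set ξ : ℂ := (z - w) / (z - (starRingEnd ℂ) w) with hξdef
  have hξlt : ‖ξ‖ < 1 := by
    rw [hξdef, norm_div, div_lt_one (norm_pos_iff.mpr hzw)]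
    have h1 : normSq (z - w) < normSq (z - (starRingEnd ℂ) w) := by
      rw [normSq_conj_diff]
      nlinarith
    have := Real.sqrt_lt_sqrt (normSq_nonneg _) h1
    simpa [Complex.norm_def] using this
  have hMξ : M ξ = z := by
    show (w - (starRingEnd ℂ) w * ξ) / (1 - ξ) = z
    rw [hξdef]
    field_simp
    rw [div_eq_iff (by rwa [sub_sub_sub_cancel_left])]
    ring
  have h2 := hSchwarz ξ hξlt
  simp only [hg, hMξ, mob, norm_div] at h2
  rw [hξdef, norm_div] at h2
  rw [div_le_div_iff₀ (norm_pos_iff.mpr (denom_ne _ _ hfw (hb z hz).le))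
    (norm_pos_iff.mpr hzw)] at h2
  linarith

set_option maxHeartbeats 1000000 in
lemma prod_tendsto {f g : ℂ → ℂ}
    (hfd : DifferentiableOn ℂ f upperHalf)
    (hfb : ∀ z ∈ upperHalf, ‖f z‖ < 1)
    (hgb : ∀ z ∈ upperHalf, ‖g z‖ < 1)
    (Hf : ∀ θ : ℂ, ‖θ‖ = 1 → ∀ ε : ℝ, 0 < ε →
      Tendsto (fun z => ‖z‖ * ‖f z - θ‖) (sectorAtInfty ε) atTop)
    {θ : ℂ} (hθ : ‖θ‖ = 1) {ε : ℝ} (hε : 0 < ε) :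
    Tendsto (fun z => ‖z‖ * ‖f z * g z - θ‖) (sectorAtInfty ε) atTop := by
  by_contra hcon
  rw [Filter.tendsto_atTop] at hcon
  push_neg at hcon
  obtain ⟨C₀, hC₀⟩ := hcon
  haveI : (sectorAtInfty ε).IsCountablyGenerated := by unfold sectorAtInfty; infer_instance
  obtain ⟨x, hxtend, hxlt⟩ := Filter.exists_seq_forall_of_frequently hC₀
  set C : ℝ := max C₀ 1 with hCdef
  have hC1 : (1:ℝ) ≤ C := le_max_right _ _
  have hCpos : (0:ℝ) < C := by linarith
  have htend1 : Tendsto (fun n => ‖x n‖) atTop atTop := by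
    have := hxtend.mono_right inf_le_left
    rwa [Filter.tendsto_comap_iff] at this
  have hsec : ∀ᶠ n in atTop, x n ∈ sector ε := by
    have := hxtend.mono_right inf_le_right
    rwa [Filter.tendsto_principal] at this
  obtain ⟨N, hN⟩ := Filter.eventually_atTop.mp hsec
  set w : ℕ → ℂ := fun n => x (n + N) with hwdef
  have hwsec : ∀ n, w n ∈ sector ε := fun n => hN _ (Nat.le_add_left N n)
  have htendw : Tendsto w atTop (sectorAtInfty ε) := hxtend.comp (Filter.tendsto_add_atTop_nat N)
  have habsw : Tendsto (fun n => ‖w n‖) atTop atTop :=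
    htend1.comp (Filter.tendsto_add_atTop_nat N)
  have hwlt : ∀ n, ‖w n‖ * ‖f (w n) * g (w n) - θ‖ ≤ C := by
    intro n
    have := hxlt (n + N)
    exact le_trans this.le (le_max_left _ _)
  clear_value w C
  clear hwdef hCdef hxlt hxtend htend1 hsec hN hC₀
  have hsinpos : 0 < Real.sin ε := sector_sin_pos hε (hwsec 0)
  have hup : ∀ n, w n ∈ upperHalf := fun n => sector_subset hε (hwsec n)
  have habspos : ∀ n, 0 < ‖w n‖ := fun n => sector_pos_abs hε (hwsec n)
  have hIm : ∀ n, Real.sin ε * ‖w n‖ ≤ (w n).im := fun n => sector_im hε (hwsec n)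
  have hImpos : ∀ n, 0 < (w n).im := fun n => hup n
  -- key bound : |w n| (1 - |f (w n)|) ≤ C
  have key1 : ∀ n, ‖w n‖ * (1 - ‖f (w n)‖) ≤ C := by
    intro n
    have hfa := hfb _ (hup n)
    have hga := hgb _ (hup n)
    have h1 : ‖θ‖ - ‖f (w n) * g (w n)‖ ≤
        ‖f (w n) * g (w n) - θ‖ := by
      calc ‖θ‖ - ‖f (w n) * g (w n)‖
          = ‖θ‖ - ‖f (w n) * g (w n)‖ := rfl
        _ ≤ ‖θ - f (w n) * g (w n)‖ := norm_sub_norm_le _ _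
        _ = ‖f (w n) * g (w n) - θ‖ := norm_sub_rev _ _
        _ = ‖f (w n) * g (w n) - θ‖ := rfl
    rw [hθ, norm_mul] at h1
    have h2 : 1 - ‖f (w n)‖ ≤ ‖f (w n) * g (w n) - θ‖ := by
      nlinarith [norm_nonneg (f (w n)), norm_nonneg (g (w n))]
    nlinarith [hwlt n, habspos n]
  -- extract a convergent subsequence of f ∘ w
  have hmem : ∀ n, f (w n) ∈ closedBall (0:ℂ) 1 := by
    intro n
    rw [mem_closedBall, dist_zero_right]
    exact (hfb _ (hup n)).le
  obtain ⟨α, hαmem, φ, hφmono, hφtend⟩ :=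
    tendsto_subseq_of_bounded (isBounded_closedBall (x := (0:ℂ)) (r := 1)) hmem
  -- |α| = 1
  have habsf : Tendsto (fun n => ‖f (w n)‖) atTop (𝓝 1) := by
    have hlow : ∀ n, 1 - C / ‖w n‖ ≤ ‖f (w n)‖ := by
      intro n
      have h := key1 n
      have hp := habspos n
      have h2 : 1 - ‖f (w n)‖ ≤ C / ‖w n‖ := by
        rw [le_div_iff₀ hp]; nlinarith
      linarith
    have hhigh : ∀ n, ‖f (w n)‖ ≤ 1 := fun n => (hfb _ (hup n)).le
    have hl : Tendsto (fun n => 1 - C / ‖w n‖) atTop (𝓝 1) := by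
      have : Tendsto (fun n => C / ‖w n‖) atTop (𝓝 0) :=
        tendsto_const_nhds.div_atTop habsw
      simpa using tendsto_const_nhds.sub this
    exact tendsto_of_tendsto_of_tendsto_of_le_of_le hl tendsto_const_nhds hlow hhigh
  have habsα : ‖α‖ = 1 := by
    have h1 : Tendsto (fun k => ‖f (w (φ k))‖) atTop (𝓝 1) :=
      habsf.comp hφmono.tendsto_atTop
    have h2 : Tendsto (fun k => ‖f (w (φ k))‖) atTop (𝓝 (‖α‖)) :=
      (continuous_norm.tendsto α).comp hφtend
    exact (tendsto_nhds_unique h2 h1)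
  -- Julia-type bound along the subsequence
  have julia : ∀ m, ‖w (φ m)‖ * ‖f (w (φ m)) - α‖ ≤
      2 * C / Real.sin ε := by
    intro m
    set u := w (φ m) with hu
    have humu : u ∈ upperHalf := hup (φ m)
    have huabs : 0 < ‖u‖ := habspos (φ m)
    have huim : Real.sin ε * ‖u‖ ≤ u.im := hIm (φ m)
    have huimpos : 0 < u.im := hImpos (φ m)
    have hfu := hfb _ humu
    -- for each large k the bound holds
    have hstep : ∀ k, ‖u‖ ≤ ‖w (φ k)‖ →
        ‖(starRingEnd ℂ) (f (w (φ k))) * f u - 1‖ ≤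
          2 * C / (Real.sin ε * ‖u‖) := by
      intro k hk
      set v := w (φ k) with hv
      have hvmu : v ∈ upperHalf := hup (φ k)
      have hvabs : 0 < ‖v‖ := habspos (φ k)
      have hvim : Real.sin ε * ‖v‖ ≤ v.im := hIm (φ k)
      have hvimpos : 0 < v.im := hImpos (φ k)
      have hfv := hfb _ hvmu
      have hsp := schwarz_pick hfd hfb humu hvmu
      -- square it
      have hsp2 : normSq (f u - f v) * normSq (u - (starRingEnd ℂ) v) ≤
          normSq ((starRingEnd ℂ) (f v) * f u - 1) * normSq (u - v) := by
        have h1 : (‖f u - f v‖ * ‖u - (starRingEnd ℂ) v‖)^2 ≤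
            (‖(starRingEnd ℂ) (f v) * f u - 1‖ * ‖u - v‖)^2 := by
          apply sq_le_sq'
          · nlinarith [norm_nonneg (f u - f v),
              norm_nonneg (u - (starRingEnd ℂ) v),
              norm_nonneg ((starRingEnd ℂ) (f v) * f u - 1),
              norm_nonneg (u - v)]
          · exact hsp
        calc normSq (f u - f v) * normSq (u - (starRingEnd ℂ) v)
            = (‖f u - f v‖ * ‖u - (starRingEnd ℂ) v‖)^2 := by
              rw [mul_pow, Complex.sq_norm, Complex.sq_norm]
          _ ≤ (‖(starRingEnd ℂ) (f v) * f u - 1‖ * ‖u - v‖)^2 := h1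
          _ = normSq ((starRingEnd ℂ) (f v) * f u - 1) * normSq (u - v) := by
              rw [mul_pow, Complex.sq_norm, Complex.sq_norm]
      have hid1 : normSq ((starRingEnd ℂ) (f v) * f u - 1) =
          normSq (f u - f v) + (1 - normSq (f v)) * (1 - normSq (f u)) := normSq_key (f v) (f u)
      have hid2 : normSq (u - (starRingEnd ℂ) v) = normSq (u - v) + 4 * u.im * v.im :=
        normSq_conj_diff u v
      -- the horocycle inequality
      have hhoro : normSq ((starRingEnd ℂ) (f v) * f u - 1) * (4 * u.im * v.im) ≤
          normSq (u - (starRingEnd ℂ) v) * ((1 - normSq (f v)) * (1 - normSq (f u))) := by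
        have heq : normSq ((starRingEnd ℂ) (f v) * f u - 1) * (4 * u.im * v.im) -
            normSq (u - (starRingEnd ℂ) v) * ((1 - normSq (f v)) * (1 - normSq (f u))) =
            normSq (f u - f v) * normSq (u - (starRingEnd ℂ) v) -
            normSq ((starRingEnd ℂ) (f v) * f u - 1) * normSq (u - v) := by
          linear_combination normSq (u - (starRingEnd ℂ) v) * hid1 -
            normSq ((starRingEnd ℂ) (f v) * f u - 1) * hid2
        linarith [hsp2]
      -- bound each factor
      have hb1 : 1 - normSq (f u) ≤ 2 * (C / ‖u‖) := by
        have := key1 (φ m)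
        rw [← hu] at this
        have h3 : ‖u‖ * (1 - ‖f u‖) ≤ C := this
        have h4 : 1 - ‖f u‖ ≤ C / ‖u‖ := by
          rw [le_div_iff₀ huabs, mul_comm]; exact h3
        have h5 : normSq (f u) = ‖f u‖ ^ 2 := (Complex.sq_norm _).symm
        nlinarith [h4, h5, hfu.le, norm_nonneg (f u), div_nonneg hCpos.le huabs.le]
      have hb2 : 1 - normSq (f v) ≤ 2 * (C / ‖v‖) := by
        have := key1 (φ k)
        rw [← hv] at this
        have h4 : 1 - ‖f v‖ ≤ C / ‖v‖ := by
          rw [le_div_iff₀ hvabs, mul_comm]; exact this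
        have h5 : normSq (f v) = ‖f v‖ ^ 2 := (Complex.sq_norm _).symm
        nlinarith [h4, h5, hfv.le, norm_nonneg (f v), div_nonneg hCpos.le hvabs.le]
      have hb3 : normSq (u - (starRingEnd ℂ) v) ≤ 4 * ‖v‖ ^ 2 := by
        have h6 : ‖u - (starRingEnd ℂ) v‖ ≤ ‖u‖ + ‖v‖ := by
          calc ‖u - (starRingEnd ℂ) v‖ ≤
              ‖u‖ + ‖(starRingEnd ℂ) v‖ := norm_sub_le u _
            _ = ‖u‖ + ‖v‖ := by rw [Complex.norm_conj]
        have h7 : normSq (u - (starRingEnd ℂ) v) = ‖u - (starRingEnd ℂ) v‖ ^ 2 :=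
          (Complex.sq_norm _).symm
        nlinarith [norm_nonneg (u - (starRingEnd ℂ) v)]
      -- combine
      have hfin : normSq ((starRingEnd ℂ) (f v) * f u - 1) ≤
          (2 * C / (Real.sin ε * ‖u‖))^2 := by
        have him1 : 0 < Real.sin ε * ‖u‖ := mul_pos hsinpos huabs
        have him2 : 0 < Real.sin ε * ‖v‖ := mul_pos hsinpos hvabs
        have h8 : normSq ((starRingEnd ℂ) (f v) * f u - 1) * (4 * u.im * v.im) ≤
            4 * ‖v‖ ^ 2 * (2 * (C / ‖v‖) * (2 * (C / ‖u‖))) := by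
          calc normSq ((starRingEnd ℂ) (f v) * f u - 1) * (4 * u.im * v.im) ≤
              normSq (u - (starRingEnd ℂ) v) * ((1 - normSq (f v)) * (1 - normSq (f u))) := hhoro
            _ ≤ 4 * ‖v‖ ^ 2 * (2 * (C / ‖v‖) * (2 * (C / ‖u‖))) := by
                have p1 : 0 ≤ 1 - normSq (f v) := by
                  have := Complex.sq_norm (f v); nlinarith [norm_nonneg (f v)]
                have p2 : 0 ≤ 1 - normSq (f u) := by
                  have := Complex.sq_norm (f u); nlinarith [norm_nonneg (f u)]
                have := mul_le_mul hb2 hb1 p2 (by positivity)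
                nlinarith [normSq_nonneg (u - (starRingEnd ℂ) v), hb3,
                  mul_nonneg p1 p2, div_nonneg hCpos.le huabs.le, div_nonneg hCpos.le hvabs.le]
        -- now divide
        rw [div_pow, le_div_iff₀ (by positivity)]
        have hq : 4 * ‖v‖ ^ 2 * (2 * (C / ‖v‖) * (2 * (C / ‖u‖)))
            = 16 * C^2 * ‖v‖ / ‖u‖ := by field_simp; ring
        rw [hq] at h8
        have hP : 0 ≤ normSq ((starRingEnd ℂ) (f v) * f u - 1) := normSq_nonneg _
        have hprod : (Real.sin ε * ‖u‖) * (Real.sin ε * ‖v‖) ≤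
            u.im * v.im := mul_le_mul huim hvim (by positivity) huimpos.le
        have h10 : normSq ((starRingEnd ℂ) (f v) * f u - 1) * (4 * u.im * v.im) *
            ‖u‖ ≤ 16 * C^2 * ‖v‖ := by
          have h11 := mul_le_mul_of_nonneg_right h8 huabs.le
          rwa [div_mul_cancel₀ _ huabs.ne'] at h11
        nlinarith [mul_le_mul_of_nonneg_left hprod
          (by positivity : (0:ℝ) ≤ 4 * normSq ((starRingEnd ℂ) (f v) * f u - 1) *
            ‖u‖), h10, hvabs, hP, huabs, hsinpos]
      -- take square roots
      have hgoal : ‖(starRingEnd ℂ) (f v) * f u - 1‖ ^ 2 ≤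
          (2 * C / (Real.sin ε * ‖u‖))^2 := by rwa [Complex.sq_norm]
      have hrhs : 0 ≤ 2 * C / (Real.sin ε * ‖u‖) := by positivity
      nlinarith [norm_nonneg ((starRingEnd ℂ) (f v) * f u - 1), hgoal, hrhs]
    -- pass to the limit in k
    have hev : ∀ᶠ k in atTop, ‖(starRingEnd ℂ) (f (w (φ k))) * f u - 1‖ ≤
        2 * C / (Real.sin ε * ‖u‖) := by
      have : ∀ᶠ k in atTop, ‖u‖ ≤ ‖w (φ k)‖ :=
        (habsw.comp hφmono.tendsto_atTop).eventually_ge_atTop (‖u‖)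
      filter_upwards [this] with k hk using hstep k hk
    have hlim : Tendsto (fun k => ‖(starRingEnd ℂ) (f (w (φ k))) * f u - 1‖) atTop
        (𝓝 (‖(starRingEnd ℂ) α * f u - 1‖)) := by
      have hc : Continuous fun c : ℂ => ‖(starRingEnd ℂ) c * f u - 1‖ := by
        continuity
      exact (hc.tendsto α).comp hφtend
    have hαb : ‖(starRingEnd ℂ) α * f u - 1‖ ≤ 2 * C / (Real.sin ε * ‖u‖) :=
      le_of_tendsto hlim hev
    -- rewrite |conj α f u - 1| = |f u - α|
    have hrw : (starRingEnd ℂ) α * f u - 1 = (starRingEnd ℂ) α * (f u - α) := by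
      have hαα : (starRingEnd ℂ) α * α = 1 := by
        rw [← Complex.normSq_eq_conj_mul_self]
        rw [← Complex.ofReal_one]
        norm_cast
        rw [← Complex.sq_norm, habsα]; norm_num
      rw [mul_sub, hαα]
    rw [hrw, norm_mul, Complex.norm_conj, habsα, one_mul] at hαb
    calc ‖u‖ * ‖f u - α‖ ≤
        ‖u‖ * (2 * C / (Real.sin ε * ‖u‖)) := by
          exact mul_le_mul_of_nonneg_left hαb huabs.le
      _ = 2 * C / Real.sin ε := by field_simp
  -- contradiction with the hypothesis Hf at α
  have hcontra : Tendsto (fun m => ‖w (φ m)‖ * ‖f (w (φ m)) - α‖)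
      atTop atTop :=
    (Hf α habsα ε hε).comp (htendw.comp hφmono.tendsto_atTop)
  obtain ⟨m, hm⟩ := (Filter.tendsto_atTop.mp hcontra (2 * C / Real.sin ε + 1)).exists
  have := julia m
  linarith

lemma transfer {κ : ℂ} (hκ : ‖κ‖ < 1) {f S : ℂ → ℂ}
    (hfS : ∀ z ∈ upperHalf, S z = mob κ (f z))
    (hfb : ∀ z ∈ upperHalf, ‖f z‖ < 1)
    (H : ∀ θ : ℂ, ‖θ‖ = 1 → ∀ ε : ℝ, 0 < ε →
      Tendsto (fun z => ‖z‖ * ‖f z - θ‖) (sectorAtInfty ε) atTop) :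
    ∀ θ : ℂ, ‖θ‖ = 1 → ∀ ε : ℝ, 0 < ε →
      Tendsto (fun z => ‖z‖ * ‖S z - θ‖) (sectorAtInfty ε) atTop := by
  intro θ hθ ε hε
  set θ' := mob κ θ with hθ'def
  have hθ' : ‖θ'‖ = 1 := mob_eq_one hκ hθ
  have hθeq : mob κ θ' = θ := mob_invol hκ hθ.le
  have hc4 : 0 < (1 - ‖κ‖ ^ 2) / 4 := by nlinarith [norm_nonneg κ]
  have hmem : ∀ᶠ z in sectorAtInfty ε, z ∈ sector ε := by
    unfold sectorAtInfty
    exact (Filter.eventually_inf_principal).mpr (Filter.Eventually.of_forall fun z h => h)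
  have hlow : ∀ᶠ z in sectorAtInfty ε,
      (1 - ‖κ‖ ^ 2) / 4 * (‖z‖ * ‖f z - θ'‖) ≤
        ‖z‖ * ‖S z - θ‖ := by
    filter_upwards [hmem] with z hzsec
    have hzu := sector_subset hε hzsec
    rw [hfS z hzu, ← hθeq]
    have hdiff := mob_diff_lower hκ (hfb z hzu).le hθ'.le
    have habsz := norm_nonneg z
    calc (1 - ‖κ‖ ^ 2) / 4 * (‖z‖ * ‖f z - θ'‖)
        = ‖z‖ * ((1 - ‖κ‖ ^ 2) / 4 * ‖f z - θ'‖) := by ring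
      _ ≤ ‖z‖ * ‖mob κ (f z) - mob κ θ'‖ :=
          mul_le_mul_of_nonneg_left hdiff habsz
  have hmul : Tendsto (fun z => (1 - ‖κ‖ ^ 2) / 4 *
      (‖z‖ * ‖f z - θ'‖)) (sectorAtInfty ε) atTop :=
    (H θ' hθ' ε hε).const_mul_atTop hc4
  exact tendsto_atTop_mono' _ hlow hmul

lemma I_mem_upperHalf : Complex.I ∈ upperHalf := by
  show (0:ℝ) < Complex.I.im
  simp


lemma mob_comp_diff {κ : ℂ} (hκ : ‖κ‖ < 1) {f : ℂ → ℂ}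
    (hfd : DifferentiableOn ℂ f upperHalf) (hfb : ∀ z ∈ upperHalf, ‖f z‖ < 1) :
    DifferentiableOn ℂ (fun z => mob κ (f z)) upperHalf := by
  apply DifferentiableOn.div
  · exact hfd.sub (differentiableOn_const _)
  · exact ((differentiableOn_const _).mul hfd).sub (differentiableOn_const _)
  · intro z hz
    exact denom_ne _ _ hκ (hfb z hz).le

/-- The class `𝔖` is closed under pointwise multiplication. -/
theorem statement13 (S₁ S₂ : ℂ → ℂ) (h₁ : MemCharClass S₁) (h₂ : MemCharClass S₂) :
    MemCharClass (fun z => S₁ z * S₂ z) := by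
  obtain ⟨s₁, κ₁, ⟨hd₁, hb₁, hi₁, ht₁⟩, hκ₁, hEq₁⟩ := h₁
  obtain ⟨s₂, κ₂, ⟨hd₂, hb₂, hi₂, ht₂⟩, hκ₂, hEq₂⟩ := h₂
  have hEq₁' : ∀ z ∈ upperHalf, S₁ z = mob κ₁ (s₁ z) := hEq₁
  have hEq₂' : ∀ z ∈ upperHalf, S₂ z = mob κ₂ (s₂ z) := hEq₂
  have hS₁d : DifferentiableOn ℂ S₁ upperHalf :=
    (mob_comp_diff hκ₁ hd₁ hb₁).congr hEq₁'
  have hS₂d : DifferentiableOn ℂ S₂ upperHalf :=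
    (mob_comp_diff hκ₂ hd₂ hb₂).congr hEq₂'
  have hS₁b : ∀ z ∈ upperHalf, ‖S₁ z‖ < 1 := by
    intro z hz; rw [hEq₁' z hz]; exact mob_lt_one hκ₁ (hb₁ z hz)
  have hS₂b : ∀ z ∈ upperHalf, ‖S₂ z‖ < 1 := by
    intro z hz; rw [hEq₂' z hz]; exact mob_lt_one hκ₂ (hb₂ z hz)
  have hS₁t := transfer hκ₁ hEq₁' hb₁ ht₁
  have hS₁I : S₁ Complex.I = κ₁ := by
    rw [hEq₁' _ I_mem_upperHalf, hi₁]
    simp [mob]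
  have hS₂I : S₂ Complex.I = κ₂ := by
    rw [hEq₂' _ I_mem_upperHalf, hi₂]
    simp [mob]
  set κ : ℂ := κ₁ * κ₂ with hκdef
  have hκ : ‖κ‖ < 1 := by
    rw [hκdef, norm_mul]
    nlinarith [norm_nonneg κ₁, norm_nonneg κ₂]
  have hPb : ∀ z ∈ upperHalf, ‖S₁ z * S₂ z‖ < 1 := by
    intro z hz
    rw [norm_mul]
    nlinarith [norm_nonneg (S₁ z), norm_nonneg (S₂ z), hS₁b z hz, hS₂b z hz]
  have hPd : DifferentiableOn ℂ (fun z => S₁ z * S₂ z) upperHalf := hS₁d.mul hS₂d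
  refine ⟨fun z => mob κ (S₁ z * S₂ z), κ, ⟨?_, ?_, ?_, ?_⟩, hκ, ?_⟩
  · exact mob_comp_diff hκ hPd hPb
  · intro z hz
    exact mob_lt_one hκ (hPb z hz)
  · show mob κ (S₁ Complex.I * S₂ Complex.I) = 0
    rw [hS₁I, hS₂I, ← hκdef]
    simp [mob]
  · exact transfer hκ (fun z _ => rfl) hPb
      (fun θ hθ ε hε => prod_tendsto hS₁d hS₁b hS₂b hS₁t hθ hε)
  · intro z hz
    exact (mob_invol hκ (hPb z hz).le).symm
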